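/- Let μ ≥ 1, s ≥ 2, n = sμ − 1, and ω ∈ ℝ. Define S_{n−1} = ω, S_{n−1−μ} = S_{n−1+μ} = 1, and S_l = 0 for every other l ∈ {0,…,2n−1}. If for some m ≤ n there exist nonzero complex numbers Z_1,…,Z_m and pairwise distinct complex numbers z_1,…,z_m with |z_k| = 1 such that ∑_{k=1}^m Z_k z_k^l = S_l for every l = 0,…,2n−1, then U_s(ω/2) = 0, where U_s is the Chebyshev polynomial of the second kind. -/

import Mathlib

open Polynomial Finset

noncomputable section Stmt14Aux

/-- remainder coefficients of `X^k` modulo `X^2 + ω X + 1`. -/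
def stmt14uv (ω : ℝ) : ℕ → ℝ × ℝ
  | 0 => (0, 1)
  | k + 1 => ((stmt14uv ω k).2 - ω * (stmt14uv ω k).1, -(stmt14uv ω k).1)

lemma stmt14_cheb_dvd (ω : ℝ) (k : ℕ) :
    (1 + C ω * X + X ^ 2 : ℝ[X]) ∣
      X ^ k - (C ((stmt14uv ω k).1) * X + C ((stmt14uv ω k).2)) := by
  induction k with
  | zero => simp [stmt14uv]
  | succ k ih =>
    obtain ⟨d, hd⟩ := ih
    refine ⟨X * d + C ((stmt14uv ω k).1), ?_⟩
    rw [stmt14uv]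
    simp only [map_sub, map_mul, map_neg]
    linear_combination (X : ℝ[X]) * hd

lemma stmt14_cheb_dvd_mu (ω : ℝ) (μ k : ℕ) :
    (1 + C ω * X ^ μ + X ^ (2 * μ) : ℝ[X]) ∣
      X ^ (k * μ) - (C ((stmt14uv ω k).1) * X ^ μ + C ((stmt14uv ω k).2)) := by
  obtain ⟨d, hd⟩ := stmt14_cheb_dvd ω k
  refine ⟨d.comp (X ^ μ), ?_⟩
  have h := congrArg (fun p : ℝ[X] => p.comp (X ^ μ)) hd
  simp only [sub_comp, add_comp, mul_comp, pow_comp, X_comp, C_comp, one_comp] at h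
  rw [← pow_mul, ← pow_mul, mul_comm μ k, mul_comm μ 2] at h
  exact h

lemma stmt14_uv_fst (ω : ℝ) (k : ℕ) :
    (stmt14uv ω (k + 1)).1 = (-1 : ℝ) ^ k * (Polynomial.Chebyshev.U ℝ k).eval (ω / 2) := by
  induction k using Nat.twoStepInduction with
  | zero => simp [stmt14uv, Polynomial.Chebyshev.U_zero]
  | one =>
    show (stmt14uv ω 2).1 = _
    simp [stmt14uv, Polynomial.Chebyshev.U_one]
    ring
  | more k ih1 ih2 =>
    have hrec : (stmt14uv ω (k + 3)).1
        = -ω * (stmt14uv ω (k + 2)).1 - (stmt14uv ω (k + 1)).1 := by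
      show ((stmt14uv ω (k + 2)).2 - ω * (stmt14uv ω (k + 2)).1) = _
      show (-(stmt14uv ω (k+1)).1 - ω * (stmt14uv ω (k + 2)).1) = _
      ring
    have hU : Polynomial.Chebyshev.U ℝ ((k : ℤ) + 2)
        = 2 * X * Polynomial.Chebyshev.U ℝ ((k : ℤ) + 1) - Polynomial.Chebyshev.U ℝ k :=
      Polynomial.Chebyshev.U_add_two ℝ k
    have hcast : ((k + 2 : ℕ) : ℤ) = (k : ℤ) + 2 := by push_cast; ring
    have hcast1 : ((k + 1 : ℕ) : ℤ) = (k : ℤ) + 1 := by push_cast; ring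
    rw [hrec, ih1, ih2, hcast, hU]
    simp [eval_sub, eval_mul]
    ring

lemma stmt14_coeff_window (c : ℕ → ℂ) (L r : ℕ) :
    (∑ i ∈ range L, C (c i) * X ^ i).coeff r = if r < L then c r else 0 := by
  rw [finset_sum_coeff]
  split_ifs with h
  · rw [Finset.sum_eq_single r
      (fun i _ hne => by rw [coeff_C_mul, coeff_X_pow, if_neg (fun hh => hne hh.symm), mul_zero])
      (fun hr => absurd (mem_range.mpr h) hr)]
    rw [coeff_C_mul, coeff_X_pow, if_pos rfl, mul_one]
  · refine Finset.sum_eq_zero fun i hi => ?_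
    rw [coeff_C_mul, coeff_X_pow, if_neg (by have := mem_range.mp hi; omega), mul_zero]

lemma stmt14_window_deg (c : ℕ → ℂ) (L : ℕ) :
    (∑ i ∈ range L, C (c i) * X ^ i).natDegree ≤ L - 1 := by
  refine natDegree_le_iff_coeff_eq_zero.mpr fun N hN => ?_
  rw [stmt14_coeff_window, if_neg (by omega)]

lemma stmt14_rev_lin (ρ : ℂ) : (X - C ρ).reverse = 1 - C ρ * X := by
  rw [reverse, natDegree_X_sub_C]
  rw [show (X - C ρ : ℂ[X]) = C 1 * X ^ 1 - C ρ * X ^ 0 by simp]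
  rw [reflect_sub, reflect_C_mul_X_pow, reflect_C_mul_X_pow,
    revAt_le (by norm_num : (1:ℕ) ≤ 1), revAt_le (by norm_num : (0:ℕ) ≤ 1)]
  simp

lemma stmt14_rev_prod (s : Multiset ℂ) :
    ((s.map fun ρ => X - C ρ).prod).reverse = (s.map fun ρ => 1 - C ρ * X).prod := by
  induction s using Multiset.induction_on with
  | empty => simp [reverse]
  | cons ρ s ih =>
    rw [Multiset.map_cons, Multiset.map_cons, Multiset.prod_cons, Multiset.prod_cons,
      reverse_mul_of_domain, stmt14_rev_lin, ih]

end Stmt14Aux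


/-- for n = sμ - 1, admissible solvability of the (possibly overdetermined)
moment system (nonzero weights, pairwise distinct unimodular nodes, m ≤ n terms) forces
U_s(ω/2) = 0. -/
theorem stmt14 (μ s n : ℕ) (hμ : 1 ≤ μ) (hs : 2 ≤ s) (hn : n = s * μ - 1) (ω : ℝ)
    (m : ℕ) (hm : m ≤ n) (Z z : Fin m → ℂ)
    (hZ : ∀ k, Z k ≠ 0) (hz : Function.Injective z) (habs : ∀ k, ‖z k‖ = 1)
    (hmom : ∀ l : ℤ, 0 ≤ l → l ≤ 2 * (n : ℤ) - 1 →
      ∑ k : Fin m, Z k * z k ^ l =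
        if l = (n : ℤ) - 1 then (ω : ℂ)
        else if l = (n : ℤ) - 1 - μ ∨ l = (n : ℤ) - 1 + μ then 1 else 0) :
    Polynomial.eval (ω / 2) (Polynomial.Chebyshev.U ℝ s) = 0 := by
  classical
  have hsμ : 2 ≤ s * μ := le_trans hs (Nat.le_mul_of_pos_right s hμ)
  have hsmu : s * μ = n + 1 := by omega
  by_cases hedge : n = 1
  · -- edge case: s = 2, μ = 1, n = 1
    have hs2 : s = 2 := by nlinarith
    have hμ1 : μ = 1 := by nlinarith
    subst hedge hs2 hμ1
    have h1 := hmom 1 (by norm_num) (by norm_num)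
    have h0 := hmom 0 (by norm_num) (by norm_num)
    simp only [Nat.cast_one] at h1 h0
    rw [if_neg (by norm_num), if_pos (by norm_num)] at h1
    rw [if_pos (by norm_num)] at h0
    -- m = 0 impossible, m = 1 forces ω = ±1
    interval_cases m
    · simp at h1
    · simp only [Fin.sum_univ_one] at h1 h0
      have hz0 : ‖Z 0 * z 0 ^ (1:ℤ)‖ = 1 := by rw [h1]; simp
      rw [norm_mul] at hz0
      simp [habs 0] at hz0
      rw [zpow_zero, mul_one] at h0
      rw [h0] at hz0
      have : ω = 1 ∨ ω = -1 := by
        rcases abs_eq (by norm_num : (0:ℝ) ≤ 1) |>.mp (by simpa using hz0) with h | h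
        · left; exact h
        · right; exact h
      have hU2 : Polynomial.Chebyshev.U ℝ (2 : ℕ) = 4 * X ^ 2 - 1 := by
        have := Polynomial.Chebyshev.U_two (R := ℝ)
        norm_num at this ⊢
        exact this
      rw [hU2]
      rcases this with h | h <;> subst h <;> norm_num
  ·
    have h2μ : 2 * μ ≤ s * μ := Nat.mul_le_mul_right μ hs
    have hμn : μ + 1 ≤ n := by omega
    set e : ℕ := n - 1 - μ with he
    -- the node polynomial (reversed) and related objects
    set cc : ℂ[X] := ∏ k : Fin m, (1 - C (z k) * X) with hcc
    set T : ℂ[X] := 1 + C (ω:ℂ) * X ^ μ + X ^ (2*μ) with hT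
    set Sp : ℂ[X] := X ^ e * T with hSp
    set R : ℂ[X] := T * cc with hR
    have hlin : ∀ w : ℂ, (1 - C w * X : ℂ[X]).natDegree ≤ 1 := by
      intro w
      rw [show (1 - C w * X : ℂ[X]) = C (-w) * X + C 1 by rw [map_neg, C_1]; ring]
      exact natDegree_linear_le
    -- Step A : coefficients of Sp are the moments
    have hSc : ∀ t : ℕ, t ≤ 2*n - 1 → Sp.coeff t = ∑ k, Z k * z k ^ t := by
      intro t ht
      have hm' := hmom (t : ℤ) (Int.natCast_nonneg t) (by omega)
      simp only [zpow_natCast] at hm'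
      have hSpt : Sp.coeff t =
          (if (t:ℤ) = (n:ℤ) - 1 then (ω:ℂ)
            else if (t:ℤ) = (n:ℤ) - 1 - μ ∨ (t:ℤ) = (n:ℤ) - 1 + μ then 1 else 0) := by
        have hform : Sp = X ^ e + C (ω:ℂ) * X ^ (n-1) + X ^ (n-1+μ) := by
          rw [hSp, hT, show n - 1 + μ = e + 2*μ by omega, show n - 1 = e + μ by omega,
            pow_add, pow_add]
          ring
        have hc : Sp.coeff t = (if t = e then (1:ℂ) else 0)
            + (if t = n-1 then (ω:ℂ) else 0) + (if t = n-1+μ then (1:ℂ) else 0) := by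
          rw [hform, coeff_add, coeff_add, coeff_X_pow, coeff_C_mul, coeff_X_pow, coeff_X_pow,
            mul_ite, mul_one, mul_zero]
        rw [hc]
        split_ifs <;> first | (exfalso; omega) | ring1
      rw [hSpt, ← hm']
    -- Step B : middle coefficients of Sp * cc vanish
    have hB : ∀ t : ℕ, m ≤ t → t ≤ 2*n - 1 → (Sp * cc).coeff t = 0 := by
      intro t htm ht
      rw [coeff_mul]
      rw [Finset.sum_congr rfl (fun x hx => by
        rw [hSc x.1 (by have := mem_antidiagonal.mp hx; omega), Finset.sum_mul])]
      rw [Finset.sum_comm]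
      refine Finset.sum_eq_zero fun k _ => ?_
      rw [Finset.sum_congr rfl (fun x _ => mul_assoc (Z k) _ _), ← Finset.mul_sum]
      have hgeo : ∑ x ∈ antidiagonal t, z k ^ x.1 * cc.coeff x.2
          = ((∑ i ∈ range (t+1), (C (z k) * X) ^ i) * cc).coeff t := by
        rw [coeff_mul]
        refine Finset.sum_congr rfl fun x hx => ?_
        have hx1 : x.1 < t + 1 := by have := mem_antidiagonal.mp hx; omega
        congr 1
        have : (∑ i ∈ range (t+1), (C (z k) * X) ^ i)
            = ∑ i ∈ range (t+1), C (z k ^ i) * X ^ i := by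
          refine Finset.sum_congr rfl fun i _ => by rw [mul_pow, C_pow]
        rw [this, stmt14_coeff_window (fun i => z k ^ i), if_pos hx1]
      rw [hgeo]
      have hfac : cc = (1 - C (z k) * X) * ∏ j ∈ univ.erase k, (1 - C (z j) * X) :=
        (Finset.mul_prod_erase _ _ (mem_univ k)).symm
      set Q : ℂ[X] := ∏ j ∈ univ.erase k, (1 - C (z j) * X) with hQ
      have hgm : (∑ i ∈ range (t+1), (C (z k) * X) ^ i) * (1 - C (z k) * X)
          = 1 - (C (z k) * X) ^ (t+1) := by
        have h := geom_sum_mul (C (z k) * X) (t+1)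
        linear_combination -h
      have hexp : (∑ i ∈ range (t+1), (C (z k) * X) ^ i) * cc
          = Q - C (z k ^ (t+1)) * (Q * X ^ (t+1)) := by
        rw [hfac, ← mul_assoc, hgm, mul_pow, C_pow]
        ring
      rw [hexp, coeff_sub, coeff_C_mul, coeff_mul_X_pow', if_neg (by omega), mul_zero, sub_zero]
      have hQd : Q.natDegree < t := by
        have h1 : Q.natDegree ≤ ∑ j ∈ univ.erase k, (1 - C (z j) * X : ℂ[X]).natDegree :=
          natDegree_prod_le _ _
        have h2 : ∑ j ∈ univ.erase k, (1 - C (z j) * X : ℂ[X]).natDegree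
            ≤ ∑ j ∈ univ.erase k, 1 := Finset.sum_le_sum fun j _ => hlin (z j)
        have h3 : ∑ j ∈ univ.erase k, (1:ℕ) = m - 1 := by
          rw [Finset.sum_const, smul_eq_mul, mul_one, card_erase_of_mem (mem_univ k),
            card_univ, Fintype.card_fin]
        have hmpos : 0 < m := k.pos
        omega
      rw [coeff_eq_zero_of_natDegree_lt hQd, mul_zero]
    -- middle coefficients of R vanish
    set ν : ℕ := m + μ - n with hν
    set N : ℕ := (s+1) * μ with hN
    have hNval : N = n + 1 + μ := by rw [hN, add_mul, one_mul, hsmu]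
    have hmid : ∀ r : ℕ, ν + 1 ≤ r → r ≤ n + μ → R.coeff r = 0 := by
      intro r h1 h2
      have h := hB (r + e) (by omega) (by omega)
      rw [show Sp * cc = X ^ e * R by rw [hSp, hR]; ring] at h
      rwa [coeff_X_pow_mul] at h
    have hccdeg : cc.natDegree ≤ m := by
      refine le_trans (natDegree_prod_le _ _) ?_
      refine le_trans (Finset.sum_le_sum fun j _ => hlin (z j)) ?_
      simp
    have hTdeg : T.natDegree ≤ 2*μ := by
      rw [hT]
      refine le_trans (natDegree_add_le _ _) ?_
      rw [natDegree_X_pow]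
      refine max_le (le_trans (natDegree_add_le _ _) ?_) le_rfl
      refine max_le (by simp) (le_trans (natDegree_C_mul_le _ _) (by rw [natDegree_X_pow]; omega))
    have hRdeg : R.natDegree ≤ 2*μ + m := by
      rw [hR]
      exact le_trans (natDegree_mul_le) (by omega)
    have hT2μ : T.coeff (2*μ) = 1 := by
      rw [hT, coeff_add, coeff_add, coeff_C_mul, coeff_X_pow, coeff_X_pow, coeff_one,
        if_neg (by omega), if_neg (by omega), if_pos rfl]
      ring
    have hTne : T ≠ 0 := fun h => by simp [h] at hT2μ
    have hTdegeq : T.natDegree = 2*μ :=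
      le_antisymm hTdeg (le_natDegree_of_ne_zero (by rw [hT2μ]; exact one_ne_zero))
    -- the split R = a + X^N * B
    set B : ℂ[X] := ∑ i ∈ range ν, C (R.coeff (N + i)) * X ^ i with hBdef
    set a : ℂ[X] := ∑ i ∈ range (ν+1), C (R.coeff i) * X ^ i with hadef
    have hνμ : ν ≤ μ := by omega
    have hsplit : R = a + X ^ N * B := by
      ext r
      rw [coeff_add, hadef, stmt14_coeff_window (fun i => R.coeff i), coeff_X_pow_mul', hBdef]
      rcases lt_or_ge r (ν+1) with h | h
      · rw [if_pos h, if_neg (by omega), add_zero]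
      · rw [if_neg (by omega)]
        rcases lt_or_ge r N with h2 | h2
        · rw [if_neg (by omega), hmid r (by omega) (by omega), add_zero]
        · rw [if_pos h2, stmt14_coeff_window (fun i => R.coeff (N + i))]
          rcases lt_or_ge (r - N) ν with h3 | h3
          · rw [if_pos h3, show N + (r - N) = r by omega, zero_add]
          · rw [if_neg (by omega),
              coeff_eq_zero_of_natDegree_lt (lt_of_le_of_lt hRdeg (show 2*μ + m < r by omega))]
            simp
    -- Chebyshev divisibility over ℝ, mapped to ℂ
    obtain ⟨Gr, hGr⟩ := stmt14_cheb_dvd_mu ω μ (s+1)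
    set p : ℝ := (stmt14uv ω (s+1)).1 with hpdef
    set q : ℝ := (stmt14uv ω (s+1)).2 with hqdef
    set G : ℂ[X] := Gr.map (algebraMap ℝ ℂ) with hGdef
    set f : ℂ[X] := X ^ N - (C (p:ℂ) * X ^ μ + C (q:ℂ)) with hfdef
    have hfTG : f = T * G := by
      have h := congrArg (Polynomial.map (algebraMap ℝ ℂ)) hGr
      simp only [Polynomial.map_sub, Polynomial.map_add, Polynomial.map_mul, Polynomial.map_pow,
        Polynomial.map_one, map_C, map_X] at h
      rw [hfdef, hT, hN, hGdef]
      convert h using 3 <;> simp [Complex.coe_algebraMap]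
    -- w := low part is divisible by T and of small degree, hence zero
    set w : ℂ[X] := a + (C (p:ℂ) * X ^ μ + C (q:ℂ)) * B with hwdef
    have hwdvd : T ∣ w := by
      have hw : w = R - f * B := by rw [hwdef, hsplit, hfdef]; ring
      rw [hw]
      exact dvd_sub (Dvd.intro cc hR.symm) (Dvd.dvd.mul_right ⟨G, hfTG⟩ B)
    have hwdeg : w.natDegree ≤ 2*μ - 1 := by
      rw [hwdef]
      refine le_trans (natDegree_add_le _ _) (max_le ?_ ?_)
      · exact le_trans (stmt14_window_deg _ _) (by omega)
      · refine le_trans natDegree_mul_le ?_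
        have h1 : (C (p:ℂ) * X ^ μ + C (q:ℂ)).natDegree ≤ μ := by
          refine le_trans (natDegree_add_le _ _) (max_le ?_ (by simp))
          exact le_trans (natDegree_C_mul_le _ _) (by rw [natDegree_X_pow])
        have h2 : B.natDegree ≤ ν - 1 := stmt14_window_deg _ _
        omega
    have hw0 : w = 0 := by
      by_contra hne
      have hdegw : w.degree < T.degree := by
        rw [degree_eq_natDegree hne, degree_eq_natDegree hTne, hTdegeq]
        exact_mod_cast lt_of_le_of_lt hwdeg (by omega : 2*μ - 1 < 2*μ)
      exact hne (Polynomial.eq_zero_of_dvd_of_degree_lt hwdvd hdegw)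
    have hRfB : R = f * B := by
      have ha : a = -((C (p:ℂ) * X ^ μ + C (q:ℂ)) * B) := by
        rw [hwdef] at hw0
        linear_combination hw0
      rw [hsplit, ha, hfdef]
      ring
    have hcGB : cc = G * B := by
      apply mul_left_cancel₀ hTne
      rw [← hR, hRfB, hfTG, mul_assoc]
    -- endgame: assume U_s(ω/2) ≠ 0
    by_contra hU
    have hpne : p ≠ 0 := by
      rw [hpdef, stmt14_uv_fst ω s]
      intro h
      rcases mul_eq_zero.mp h with h | h
      · exact pow_ne_zero s (by norm_num : (-1:ℝ) ≠ 0) h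
      · exact hU h
    have hcc0 : cc.eval 0 = 1 := by
      rw [hcc, eval_prod]
      simp
    have hGne : G ≠ 0 := by
      intro h
      rw [hcGB, h, zero_mul, eval_zero] at hcc0
      exact one_ne_zero hcc0.symm
    have hGroots : ∀ ρ ∈ G.roots, ρ * (starRingEnd ℂ) ρ = 1 ∧ ρ ≠ 0 := by
      intro ρ hρ
      have hρr : G.eval ρ = 0 := (mem_roots'.mp hρ).2
      have hccρ : cc.eval ρ = 0 := by rw [hcGB, eval_mul, hρr, zero_mul]
      rw [hcc, eval_prod] at hccρ
      obtain ⟨k, -, hk⟩ := Finset.prod_eq_zero_iff.mp hccρ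
      simp only [eval_sub, eval_mul, eval_one, eval_C, eval_X] at hk
      have hzρ : z k * ρ = 1 := by linear_combination -hk
      have hzc : z k * (starRingEnd ℂ) (z k) = 1 := by
        rw [Complex.mul_conj, Complex.normSq_eq_norm_sq, habs k]
        norm_num
      constructor
      · have h1 : (z k * ρ) * (starRingEnd ℂ) (z k * ρ) = 1 := by rw [hzρ]; simp
        rw [map_mul] at h1
        have h2 : (z k * (starRingEnd ℂ) (z k)) * (ρ * (starRingEnd ℂ) ρ) = 1 := by
          linear_combination h1
        rw [hzc, one_mul] at h2
        exact h2
      · intro h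
        rw [h, mul_zero] at hzρ
        exact zero_ne_one hzρ
    have hGconj : G.map (starRingEnd ℂ) = G := by
      rw [hGdef, Polynomial.map_map]
      congr 1
      refine RingHom.ext fun x => ?_
      simp [Complex.coe_algebraMap, Complex.conj_ofReal]
    have hrootsconj : G.roots.map (starRingEnd ℂ) = G.roots := by
      have h := Polynomial.Splits.roots_map (IsAlgClosed.splits G) (starRingEnd ℂ)
      rw [hGconj] at h
      exact h.symm
    have hGfact : G = C G.leadingCoeff * (G.roots.map fun ρ => X - C ρ).prod :=
      Polynomial.Splits.eq_prod_roots (IsAlgClosed.splits G)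
    set γ : ℂ := ((G.roots.map fun ρ => -ρ).prod) with hγdef
    have hγne : γ ≠ 0 := by
      rw [hγdef]
      intro h
      rw [Multiset.prod_eq_zero_iff] at h
      obtain ⟨x, hx, hx0⟩ := Multiset.mem_map.mp h
      exact (hGroots x hx).2 (neg_eq_zero.mp hx0)
    have hrevG : G.reverse = C γ * G := by
      nth_rewrite 1 [hGfact]
      rw [reverse_mul_of_domain, reverse_C, stmt14_rev_prod]
      have hmapeq : (G.roots.map fun ρ => (1 - C ρ * X : ℂ[X]))
          = G.roots.map fun ρ => (-C ρ) * (X - C ((starRingEnd ℂ) ρ)) := by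
        refine Multiset.map_congr rfl fun ρ hρ => ?_
        have h1 : (C ρ * C ((starRingEnd ℂ) ρ) : ℂ[X]) = 1 := by
          rw [← C_mul, (hGroots ρ hρ).1, C_1]
        linear_combination -h1
      rw [hmapeq, Multiset.prod_map_mul]
      have hCγ : (G.roots.map fun ρ => (-C ρ : ℂ[X])).prod = C γ := by
        have step : (G.roots.map fun ρ => (-C ρ:ℂ[X])) = (G.roots.map fun ρ => -ρ).map C := by
          rw [Multiset.map_map]
          exact Multiset.map_congr rfl fun ρ _ => (map_neg C ρ).symm
        rw [step, hγdef, ← map_multiset_prod]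
      have hconjprod : (G.roots.map fun ρ => (X - C ((starRingEnd ℂ) ρ) : ℂ[X])).prod
          = (G.roots.map fun ρ => X - C ρ).prod := by
        conv_rhs => rw [← hrootsconj]
        rw [Multiset.map_map]
        rfl
      rw [hCγ, hconjprod]
      conv_rhs => rw [hGfact]
      ring
    -- reverse of T
    have hrevT : T.reverse = T := by
      have hTform : T = C 1 * X ^ 0 + C (ω:ℂ) * X ^ μ + C 1 * X ^ (2*μ) := by
        rw [hT]; simp
      rw [reverse, hTdegeq]
      nth_rewrite 1 [hTform]
      rw [reflect_add, reflect_add, reflect_C_mul_X_pow, reflect_C_mul_X_pow,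
        reflect_C_mul_X_pow, revAt_le (by omega : 0 ≤ 2*μ), revAt_le (by omega : μ ≤ 2*μ),
        revAt_le (le_refl (2*μ)), hTform]
      rw [show 2*μ - 0 = 2*μ by omega, show 2*μ - μ = μ by omega, Nat.sub_self]
      ring
    -- natDegree of f
    have hfN : f.coeff N = 1 := by
      rw [hfdef, coeff_sub, coeff_add, coeff_X_pow, coeff_C_mul, coeff_X_pow, coeff_C,
        if_pos rfl, if_neg (by omega), if_neg (by omega)]
      ring
    have hfdeg : f.natDegree = N := by
      refine le_antisymm ?_ (le_natDegree_of_ne_zero (by rw [hfN]; exact one_ne_zero))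
      rw [hfdef]
      refine le_trans (natDegree_sub_le _ _) (max_le (by rw [natDegree_X_pow]) ?_)
      refine le_trans (natDegree_add_le _ _) (max_le ?_ (by simp))
      exact le_trans (natDegree_C_mul_le _ _) (by rw [natDegree_X_pow]; omega)
    -- the final coefficient comparison at X^μ
    have hrevf : f.reverse = C γ * f := by
      rw [hfTG, reverse_mul_of_domain, hrevT, hrevG]
      ring
    have hlhs : f.reverse.coeff μ = 0 := by
      rw [coeff_reverse, hfdeg, revAt_le (by omega : μ ≤ N), hfdef, coeff_sub, coeff_add,
        coeff_X_pow, coeff_C_mul, coeff_X_pow, coeff_C, if_neg (by omega), if_neg (by omega),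
        if_neg (by omega)]
      ring
    have hrhs : (C γ * f).coeff μ = γ * (-(p:ℂ)) := by
      rw [coeff_C_mul, hfdef, coeff_sub, coeff_add, coeff_X_pow, coeff_C_mul, coeff_X_pow,
        coeff_C, if_neg (by omega), if_pos rfl, if_neg (by omega)]
      ring
    rw [hrevf, hrhs] at hlhs
    have : (p:ℂ) = 0 := by
      rcases mul_eq_zero.mp hlhs with h | h
      · exact absurd h hγne
      · linear_combination -h
    exact hpne (by exact_mod_cast this)
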